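/- The submonoid of the 3-strand braid group Br₃ generated by σ₁ and σ₂⁻¹ is a free monoid on these two generators, but the subgroup of Br₃ generated by σ₁ and σ₂⁻¹ is all of Br₃, which is not a free group. -/

import Mathlib

/-- The braid relation for `Br₃`: `σ₁σ₂σ₁ = σ₂σ₁σ₂`. -/
def braidRel3 : Set (FreeGroup (Fin 2)) :=
  {FreeGroup.of 0 * FreeGroup.of 1 * FreeGroup.of 0 *
    (FreeGroup.of 1 * FreeGroup.of 0 * FreeGroup.of 1)⁻¹}

/-- The 3-strand braid group `Br₃ = ⟨σ₁, σ₂ ∣ σ₁σ₂σ₁ = σ₂σ₁σ₂⟩`. -/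
def Braid3 : Type := PresentedGroup braidRel3

noncomputable instance : Group Braid3 := by unfold Braid3; infer_instance

/-- `σ₁` in `Br₃`. -/
noncomputable def b3σ₁ : Braid3 := PresentedGroup.of 0
/-- `σ₂` in `Br₃`. -/
noncomputable def b3σ₂ : Braid3 := PresentedGroup.of 1

namespace B3Aux

/-! ### A matrix representation of `Br₃` -/

abbrev SL2 := Matrix.SpecialLinearGroup (Fin 2) ℤ

def A : SL2 := ⟨!![1,1;0,1], by simp [Matrix.det_fin_two_of]⟩
def B : SL2 := ⟨!![1,0;1,1], by simp [Matrix.det_fin_two_of]⟩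
def S2 : SL2 := ⟨!![1,0;-1,1], by simp [Matrix.det_fin_two_of]⟩

lemma B_eq_inv : B = S2⁻¹ := by
  apply eq_inv_of_mul_eq_one_left
  ext i j
  fin_cases i <;> fin_cases j <;> rw [Matrix.SpecialLinearGroup.coe_mul] <;>
    simp [A, B, S2, Matrix.SpecialLinearGroup.coe_mul, Matrix.mul_fin_two, Matrix.one_fin_two]

noncomputable def φ : Braid3 →* SL2 :=
  PresentedGroup.toGroup (f := fun i : Fin 2 => if i = 0 then A else S2) (by
    intro r hr
    simp only [braidRel3, Set.mem_singleton_iff] at hr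
    subst hr
    simp only [map_mul, map_inv, FreeGroup.lift_apply_of]
    rw [mul_inv_eq_one]
    norm_num
    ext i j
    fin_cases i <;> fin_cases j <;> rw [Matrix.SpecialLinearGroup.coe_mul, Matrix.SpecialLinearGroup.coe_mul, Matrix.SpecialLinearGroup.coe_mul, Matrix.SpecialLinearGroup.coe_mul] <;>
      simp [A, S2, Matrix.SpecialLinearGroup.coe_mul, Matrix.mul_fin_two])

lemma φ_σ₁ : φ b3σ₁ = A := by
  exact (PresentedGroup.toGroup.of (rels := braidRel3) _ (x := 0)).trans (if_pos rfl)

lemma φ_σ₂ : φ b3σ₂ = S2 := by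
  exact (PresentedGroup.toGroup.of (rels := braidRel3) _ (x := 1)).trans (if_neg (by decide))

/-! ### Freeness of the monoid generated by `A` and `B` -/

@[ext] structure Q where
  a : ℤ
  b : ℤ
  c : ℤ
  d : ℤ

def step (i : Fin 2) (m : Q) : Q :=
  if i = 0 then ⟨m.a + m.c, m.b + m.d, m.c, m.d⟩ else ⟨m.a, m.b, m.a + m.c, m.b + m.d⟩

def g : List (Fin 2) → Q
  | [] => ⟨1, 0, 0, 1⟩
  | i :: w => step i (g w)

def Inv (m : Q) : Prop :=
  0 ≤ m.a ∧ 0 ≤ m.b ∧ 0 ≤ m.c ∧ 0 ≤ m.d ∧ m.a * m.d - m.b * m.c = 1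

lemma inv_g : ∀ w, Inv (g w) := by
  intro w
  induction w with
  | nil => simp [g, Inv]
  | cons i w ih =>
    obtain ⟨h1, h2, h3, h4, h5⟩ := ih
    fin_cases i <;>
      refine ⟨?_, ?_, ?_, ?_, ?_⟩ <;>
      simp [g, step] <;> nlinarith

lemma g_inj : ∀ w₁ w₂, g w₁ = g w₂ → w₁ = w₂ := by
  intro w₁
  induction w₁ with
  | nil =>
    intro w₂ h
    cases w₂ with
    | nil => rfl
    | cons j w =>
      exfalso
      obtain ⟨h1, h2, h3, h4, h5⟩ := inv_g w
      fin_cases j <;>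
        · simp [g, step, Q.mk.injEq] at h
          obtain ⟨e1, e2, e3, e4⟩ := h
          nlinarith
  | cons i w₁ ih =>
    intro w₂ h
    cases w₂ with
    | nil =>
      exfalso
      obtain ⟨h1, h2, h3, h4, h5⟩ := inv_g w₁
      fin_cases i <;>
        · simp [g, step, Q.mk.injEq] at h
          obtain ⟨e1, e2, e3, e4⟩ := h
          nlinarith
    | cons j w₂ =>
      obtain ⟨h1, h2, h3, h4, h5⟩ := inv_g w₁
      obtain ⟨k1, k2, k3, k4, k5⟩ := inv_g w₂
      fin_cases i <;> fin_cases j <;>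
        simp only [g, step, if_pos, if_neg, Q.mk.injEq] at h ⊢
      · simp at h
        obtain ⟨e1, e2, e3, e4⟩ := h
        have : g w₁ = g w₂ := by ext <;> linarith
        rw [ih _ this]
      · exfalso
        simp at h
        obtain ⟨e1, e2, e3, e4⟩ := h
        nlinarith
      · exfalso
        simp at h
        obtain ⟨e1, e2, e3, e4⟩ := h
        nlinarith
      · simp at h
        obtain ⟨e1, e2, e3, e4⟩ := h
        have : g w₁ = g w₂ := by ext <;> linarith
        rw [ih _ this]

def fm : Fin 2 → SL2 := fun i => if i = 0 then A else B

lemma coe_prod (w : List (Fin 2)) :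
    (((w.map fm).prod : SL2) : Matrix (Fin 2) (Fin 2) ℤ) =
      !![(g w).a, (g w).b; (g w).c, (g w).d] := by
  induction w with
  | nil => simp [g, Matrix.one_fin_two]
  | cons i w ih =>
    rw [List.map_cons, List.prod_cons, Matrix.SpecialLinearGroup.coe_mul, ih]
    fin_cases i <;>
      simp [fm, g, step, A, B, Matrix.mul_fin_two]

lemma fm_inj : Function.Injective (FreeMonoid.lift fm : FreeMonoid (Fin 2) →* SL2) := by
  intro w₁ w₂ h
  rw [FreeMonoid.lift_apply, FreeMonoid.lift_apply] at h
  have h2 := congrArg (fun x : SL2 => (x : Matrix (Fin 2) (Fin 2) ℤ)) h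
  simp only [coe_prod] at h2
  have e00 := congrFun (congrFun h2 0) 0
  have e01 := congrFun (congrFun h2 0) 1
  have e10 := congrFun (congrFun h2 1) 0
  have e11 := congrFun (congrFun h2 1) 1
  simp only [Matrix.of_apply, Matrix.cons_val_zero, Matrix.cons_val_one, Matrix.head_cons,
    Matrix.cons_val', Matrix.empty_val', Matrix.cons_val_fin_one, Matrix.head_fin_const] at e00 e01 e10 e11
  have h3 : g (FreeMonoid.toList w₁) = g (FreeMonoid.toList w₂) := by
    ext <;> assumption
  have h4 := g_inj _ _ h3
  exact FreeMonoid.toList.injective h4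


/-! ### The braid relation in `Braid3`, and homomorphisms out of it -/

lemma braid_rel : b3σ₁ * b3σ₂ * b3σ₁ = b3σ₂ * b3σ₁ * b3σ₂ := by
  have h : PresentedGroup.mk braidRel3 (FreeGroup.of 0 * FreeGroup.of 1 * FreeGroup.of 0 *
      (FreeGroup.of 1 * FreeGroup.of 0 * FreeGroup.of 1)⁻¹) = 1 := by
    apply (QuotientGroup.eq_one_iff _).mpr
    apply Subgroup.subset_normalClosure
    simp [braidRel3]
  simp only [map_mul, map_inv] at h
  rw [mul_inv_eq_one] at h
  exact h

noncomputable def π : Braid3 →* Equiv.Perm (Fin 3) :=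
  PresentedGroup.toGroup
    (f := fun i : Fin 2 => if i = 0 then Equiv.swap 0 1 else Equiv.swap 1 2) (by
    intro r hr
    simp only [braidRel3, Set.mem_singleton_iff] at hr
    subst hr
    simp only [map_mul, map_inv, FreeGroup.lift_apply_of]
    decide)

lemma π_σ₁ : π b3σ₁ = Equiv.swap 0 1 := by
  exact (PresentedGroup.toGroup.of (rels := braidRel3) _ (x := 0)).trans (if_pos rfl)

lemma π_σ₂ : π b3σ₂ = Equiv.swap 1 2 := by
  exact (PresentedGroup.toGroup.of (rels := braidRel3) _ (x := 1)).trans (if_neg (by decide))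

lemma comm_hom_eq (χ : Braid3 →* Multiplicative (ℤ × ℤ)) : χ b3σ₁ = χ b3σ₂ := by
  have h := congrArg χ braid_rel
  simp only [map_mul] at h
  have h' := congrArg Multiplicative.toAdd h
  simp only [toAdd_mul] at h'
  have h1 := congrArg Prod.fst h'
  have h2 := congrArg Prod.snd h'
  simp only [Prod.fst_add, Prod.snd_add] at h1 h2
  have : Multiplicative.toAdd (χ b3σ₁) = Multiplicative.toAdd (χ b3σ₂) := by
    ext
    · linarith
    · linarith
  exact Multiplicative.toAdd.injective this

lemma pow_key (χ : Braid3 →* Multiplicative (ℤ × ℤ)) (x : Braid3) :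
    ∃ n : ℤ, χ x = (χ b3σ₁) ^ n := by
  have hx : x ∈ (Subgroup.zpowers (χ b3σ₁)).comap χ := by
    refine PresentedGroup.generated_by braidRel3 _ ?_ x
    intro j
    fin_cases j
    · exact Subgroup.mem_comap.mpr (Subgroup.mem_zpowers _)
    · refine Subgroup.mem_comap.mpr ?_
      show χ (PresentedGroup.of (rels := braidRel3) 1) ∈ _
      have : χ (PresentedGroup.of (rels := braidRel3) 1) = χ b3σ₁ := (comm_hom_eq χ).symm
      rw [this]
      exact Subgroup.mem_zpowers _
  obtain ⟨n, hn⟩ := Subgroup.mem_comap.mp hx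
  exact ⟨n, hn.symm⟩

theorem not_free : ¬ ∃ S : Type, Nonempty (Braid3 ≃* FreeGroup S) := by
  rintro ⟨S, ⟨e⟩⟩
  by_cases hS : ∃ s t : S, s ≠ t
  · obtain ⟨s, t, hst⟩ := hS
    classical
    set ψ : FreeGroup S →* Multiplicative (ℤ × ℤ) :=
      FreeGroup.lift (fun x : S => if x = s then Multiplicative.ofAdd ((1:ℤ), (0:ℤ))
        else if x = t then Multiplicative.ofAdd ((0:ℤ), (1:ℤ)) else 1) with hψ
    set χ : Braid3 →* Multiplicative (ℤ × ℤ) := ψ.comp e.toMonoidHom with hχ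
    obtain ⟨n, hn⟩ := pow_key χ (e.symm (FreeGroup.of s))
    obtain ⟨m, hm⟩ := pow_key χ (e.symm (FreeGroup.of t))
    have hs' : χ (e.symm (FreeGroup.of s)) = Multiplicative.ofAdd ((1:ℤ), (0:ℤ)) := by
      simp [hχ, hψ]
    have ht' : χ (e.symm (FreeGroup.of t)) = Multiplicative.ofAdd ((0:ℤ), (1:ℤ)) := by
      simp [hχ, hψ, hst.symm]
    rw [hs'] at hn
    rw [ht'] at hm
    have hn' := congrArg Multiplicative.toAdd hn
    have hm' := congrArg Multiplicative.toAdd hm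
    simp only [toAdd_zpow, toAdd_ofAdd] at hn' hm'
    set p := (Multiplicative.toAdd (χ b3σ₁)).1 with hp
    set q := (Multiplicative.toAdd (χ b3σ₁)).2 with hq
    have e1 : (1 : ℤ) = n * p := by
      have := congrArg Prod.fst hn'
      simpa [Prod.smul_fst, smul_eq_mul] using this
    have e2 : (0 : ℤ) = m * p := by
      have := congrArg Prod.fst hm'
      simpa [Prod.smul_fst, smul_eq_mul] using this
    have e3 : (1 : ℤ) = m * q := by
      have := congrArg Prod.snd hm'
      simpa [Prod.smul_snd, smul_eq_mul] using this
    have hp0 : p ≠ 0 := by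
      intro h0
      rw [h0, mul_zero] at e1
      exact one_ne_zero e1
    have hm0 : m = 0 := by
      rcases mul_eq_zero.mp e2.symm with h | h
      · exact h
      · exact absurd h hp0
    rw [hm0, zero_mul] at e3
    exact one_ne_zero e3
  · push_neg at hS
    have hcen : ∀ x : S, Subgroup.centralizer {FreeGroup.of x} = (⊤ : Subgroup (FreeGroup S)) := by
      intro x
      rw [eq_top_iff, ← FreeGroup.closure_range_of]
      refine (Subgroup.closure_le _).mpr ?_
      rintro _ ⟨y, rfl⟩
      rw [SetLike.mem_coe, Subgroup.mem_centralizer_iff]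
      rintro gg hgg
      rw [Set.mem_singleton_iff] at hgg
      subst hgg
      rw [hS x y]
    have hcomm : ∀ a b : FreeGroup S, a * b = b * a := by
      have hc : Subgroup.center (FreeGroup S) = ⊤ := by
        rw [eq_top_iff, ← FreeGroup.closure_range_of]
        refine (Subgroup.closure_le _).mpr ?_
        rintro _ ⟨x, rfl⟩
        rw [SetLike.mem_coe, Subgroup.mem_center_iff]
        intro gg
        have hg : gg ∈ Subgroup.centralizer {FreeGroup.of x} := by rw [hcen x]; trivial
        exact (Subgroup.mem_centralizer_iff.mp hg _ (Set.mem_singleton _)).symm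
      intro a b
      have hb : b ∈ Subgroup.center (FreeGroup S) := by rw [hc]; trivial
      exact Subgroup.mem_center_iff.mp hb a
    have hab : b3σ₁ * b3σ₂ = b3σ₂ * b3σ₁ := by
      apply e.injective
      simp only [map_mul]
      exact hcomm _ _
    have hπ := congrArg π hab
    simp only [map_mul, π_σ₁, π_σ₂] at hπ
    exact absurd hπ (by decide)

end B3Aux

/-- The submonoid of `Br₃` generated by `σ₁` and `σ₂⁻¹` is a free
monoid on these two generators (the canonical map from the free monoid on two
letters is injective), while the subgroup they generate is all of `Br₃`,
which is not a free group. -/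
theorem braid3_free_submonoid_nonfree_subgroup :
    Function.Injective
      (FreeMonoid.lift (fun i : Fin 2 => if i = 0 then b3σ₁ else b3σ₂⁻¹) :
        FreeMonoid (Fin 2) →* Braid3) ∧
    Subgroup.closure {b3σ₁, b3σ₂⁻¹} = (⊤ : Subgroup Braid3) ∧
    ¬ ∃ S : Type, Nonempty (Braid3 ≃* FreeGroup S) := by
  refine ⟨?_, ?_, B3Aux.not_free⟩
  · intro w₁ w₂ h
    apply B3Aux.fm_inj
    have hcomp : (B3Aux.φ.comp
        (FreeMonoid.lift (fun i : Fin 2 => if i = 0 then b3σ₁ else b3σ₂⁻¹)))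
        = FreeMonoid.lift B3Aux.fm := by
      apply FreeMonoid.hom_eq
      intro x
      fin_cases x <;>
        simp [B3Aux.fm, B3Aux.φ_σ₁, B3Aux.φ_σ₂, B3Aux.B_eq_inv, map_inv]
    have h1 := DFunLike.congr_fun hcomp w₁
    have h2 := DFunLike.congr_fun hcomp w₂
    simp only [MonoidHom.comp_apply] at h1 h2
    rw [← h1, ← h2, h]
  · rw [eq_top_iff]
    intro x _
    refine PresentedGroup.generated_by braidRel3 (Subgroup.closure {b3σ₁, b3σ₂⁻¹}) ?_ x
    intro j
    fin_cases j
    · exact Subgroup.subset_closure (Set.mem_insert _ _)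
    · show PresentedGroup.of (rels := braidRel3) 1 ∈ _
      have h2 : PresentedGroup.of (rels := braidRel3) 1 = (b3σ₂⁻¹)⁻¹ := by rw [inv_inv]; rfl
      rw [h2]
      exact inv_mem (Subgroup.subset_closure (Set.mem_insert_iff.mpr (Or.inr rfl)))
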